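/- For every HyperLTL sentence φ over the alphabet {x,y} that lies in the class 2^𝔾, the set {T : T ⊨_H φ} is not equal to the set of all sets T of infinite traces over {x,y} in which x and y are point independent. -/

import Mathlib

/-- LTL formulas over an alphabet `A`. -/
inductive LTL (A : Type) : Type where
  | atom : A → LTL A
  | not  : LTL A → LTL A
  | or   : LTL A → LTL A → LTL A
  | next : LTL A → LTL A
  | untl : LTL A → LTL A → LTL A

/-- LTL satisfaction over an infinite trace. -/
def LTL.Sat {A : Type} : (ℕ → A → Bool) → LTL A → Prop
  | τ, .atom a   => τ 0 a = true
  | τ, .not φ    => ¬ LTL.Sat τ φ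
  | τ, .or φ ψ   => LTL.Sat τ φ ∨ LTL.Sat τ ψ
  | τ, .next φ   => LTL.Sat (fun n => τ (n + 1)) φ
  | τ, .untl φ ψ => ∃ j, LTL.Sat (fun n => τ (n + j)) ψ ∧
      ∀ j' < j, LTL.Sat (fun n => τ (n + j')) φ

/-- HyperLTL formulas over alphabet `X`, trace variables are natural numbers;
the quantifier-free part is an LTL formula over atoms `a_π = (a, π)`. -/
inductive HyperLTL (X : Type) : Type where
  | ex  : ℕ → HyperLTL X → HyperLTL X
  | all : ℕ → HyperLTL X → HyperLTL X
  | qf  : LTL (X × ℕ) → HyperLTL X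

/-- HyperLTL satisfaction of a quantifier-free formula by a partial trace
assignment over `T` at time `i`. -/
def HSatQF {X : Type} {T : Set (ℕ → X → Bool)} (Θ : ℕ → Option ↥T) : ℕ → LTL (X × ℕ) → Prop
  | i, .atom p   => ∃ τ : ↥T, Θ p.2 = some τ ∧ τ.1 i p.1 = true
  | i, .not φ    => ¬ HSatQF Θ i φ
  | i, .or φ ψ   => HSatQF Θ i φ ∨ HSatQF Θ i ψ
  | i, .next φ   => HSatQF Θ (i + 1) φ
  | i, .untl φ ψ => ∃ j, i ≤ j ∧ HSatQF Θ j ψ ∧ ∀ j', i ≤ j' → j' < j → HSatQF Θ j' φ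

/-- HyperLTL satisfaction: quantifiers range over `T`. -/
def HSat {X : Type} {T : Set (ℕ → X → Bool)} : (ℕ → Option ↥T) → ℕ → HyperLTL X → Prop
  | Θ, i, .ex π ψ  => ∃ τ : ↥T, HSat (Function.update Θ π (some τ)) i ψ
  | Θ, i, .all π ψ => ∀ τ : ↥T, HSat (Function.update Θ π (some τ)) i ψ
  | Θ, i, .qf φ    => HSatQF Θ i φ

/-- `T ⊨_H ψ` : satisfaction from the empty trace assignment at time 0. -/
def HModels {X : Type} (T : Set (ℕ → X → Bool)) (ψ : HyperLTL X) : Prop :=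
  HSat (T := T) (fun _ => none) 0 ψ

/-- Trace variables occurring in a quantifier-free HyperLTL formula. -/
def LTL.tvars {X : Type} : LTL (X × ℕ) → Finset ℕ
  | .atom p   => {p.2}
  | .not φ    => φ.tvars
  | .or φ ψ   => φ.tvars ∪ ψ.tvars
  | .next φ   => φ.tvars
  | .untl φ ψ => φ.tvars ∪ ψ.tvars

/-- Free trace variables of a HyperLTL formula. -/
def HyperLTL.free {X : Type} : HyperLTL X → Finset ℕ
  | .ex π ψ  => ψ.free.erase π
  | .all π ψ => ψ.free.erase π
  | .qf φ    => φ.tvars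

/-- A HyperLTL sentence has no free trace variables. -/
def HyperLTL.Closed {X : Type} (ψ : HyperLTL X) : Prop := ψ.free = ∅

/-- Propositional LTL formulas: no temporal operators. -/
def LTL.Propositional {A : Type} : LTL A → Prop
  | .atom _   => True
  | .not φ    => φ.Propositional
  | .or φ ψ   => φ.Propositional ∧ ψ.Propositional
  | .next _   => False
  | .untl _ _ => False

/-- A tautology `⊤` (written `a ∨ ¬a` for an atom `a`). -/
def ltlTop {A : Type} (a : A) : LTL A := .or (.atom a) (.not (.atom a))

/-- `G φ`, abbreviating `¬(⊤ U ¬φ)`. -/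
def ltlG {A : Type} (a : A) (φ : LTL A) : LTL A := .not (.untl (ltlTop a) (.not φ))

/-- The class `𝔾` of LTL formulas `G ψ` with `ψ` propositional. -/
def GClass (A : Type) : Set (LTL A) := {φ | ∃ a ψ, LTL.Propositional ψ ∧ φ = ltlG a ψ}

/-- The alphabet `{x, y}`. -/
inductive XY : Type where
  | x : XY
  | y : XY
deriving DecidableEq

/-- The valuation with `x ↦ b₁`, `y ↦ b₂`. -/
def vXY (b₁ b₂ : Bool) : XY → Bool
  | .x => b₁
  | .y => b₂


/-- A HyperLTL formula lies in the class `2^𝔾` iff its quantifier-free part, read as an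
LTL formula over the alphabet `X × ℕ`, belongs to `𝔾`. -/
def HyperLTL.InG {X : Type} : HyperLTL X → Prop
  | .ex _ ψ  => ψ.InG
  | .all _ ψ => ψ.InG
  | .qf φ    => φ ∈ GClass (X × ℕ)

/-- `x` and `y` are point independent in `T`. -/
def PointIndep (u w : XY) (T : Set (ℕ → XY → Bool)) : Prop :=
  ∀ i : ℕ, ∀ τ ∈ T, ∀ τ' ∈ T, ∃ τ'' ∈ T, τ'' i u = τ i u ∧ τ'' i w = τ' i w

namespace PfAux

/-- The trace with `x` constantly `c`, and `y i = (decide (i = m) == c)`. -/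
def tr (c : Bool) (m : ℕ) : ℕ → XY → Bool := fun i => vXY c (decide (i = m) == c)

@[simp] lemma tr_x (c : Bool) (m i : ℕ) : tr c m i XY.x = c := rfl
@[simp] lemma tr_y (c : Bool) (m i : ℕ) : tr c m i XY.y = (decide (i = m) == c) := rfl

def SetA : Set (ℕ → XY → Bool) := {τ | ∃ c m, τ = tr c m}
def SetB : Set (ℕ → XY → Bool) := {τ | ∃ c m, τ = tr c (m + 1)}

def liftA (p : Bool × ℕ) : ↥SetA := ⟨tr p.1 p.2, p.1, p.2, rfl⟩
def liftB (p : Bool × ℕ) : ↥SetB := ⟨tr p.1 (p.2 + 1), p.1, p.2, rfl⟩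

@[simp] lemma liftA_coe (p : Bool × ℕ) : (liftA p).1 = tr p.1 p.2 := rfl
@[simp] lemma liftB_coe (p : Bool × ℕ) : (liftB p).1 = tr p.1 (p.2 + 1) := rfl

lemma piA : PointIndep XY.x XY.y SetA := by
  rintro i τ ⟨c, m, rfl⟩ τ' ⟨c', m', rfl⟩
  by_cases h : (decide (i = m') == c') = c
  · exact ⟨tr c i, ⟨c, i, rfl⟩, by simp [h]⟩
  · refine ⟨tr c (i + 1), ⟨c, i + 1, rfl⟩, by simp, ?_⟩
    simp only [tr_y]
    have : decide (i = i + 1) = false := by simp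
    rw [this]
    cases c <;> cases hb : (decide (i = m') == c') <;> simp_all

lemma not_piB : ¬ PointIndep XY.x XY.y SetB := by
  intro h
  obtain ⟨τ'', ⟨c, m, rfl⟩, h1, h2⟩ :=
    h 0 (tr true (0 + 1)) ⟨true, 0, rfl⟩ (tr false (0 + 1)) ⟨false, 0, rfl⟩
  simp only [tr_x, tr_y] at h1 h2
  have : decide (0 = m + 1) = false := by simp
  rw [this] at h2
  subst h1
  simp at h2

/-- Truth of a single atom. -/
def ASat {T : Set (ℕ → XY → Bool)} (Θ : ℕ → Option ↥T) (i : ℕ) (p : XY × ℕ) : Prop :=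
  ∃ τ : ↥T, Θ p.2 = some τ ∧ τ.1 i p.1 = true

/-- Propositional formulas only depend on atom truth. -/
lemma prop_transfer {T T' : Set (ℕ → XY → Bool)} (Θ : ℕ → Option ↥T)
    (Θ' : ℕ → Option ↥T') (i i' : ℕ) :
    ∀ ψ : LTL (XY × ℕ), ψ.Propositional →
    (∀ p : XY × ℕ, p.2 ∈ ψ.tvars → (ASat Θ i p ↔ ASat Θ' i' p)) →
    (HSatQF Θ i ψ ↔ HSatQF Θ' i' ψ)
  | .atom p, _, h => h p (by simp [LTL.tvars])
  | .not ψ, hp, h => by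
      have := prop_transfer Θ Θ' i i' ψ hp h
      simp only [HSatQF]; tauto
  | .or ψ χ, hp, h => by
      have h1 := prop_transfer Θ Θ' i i' ψ hp.1
        (fun p hm => h p (by simp [LTL.tvars]; exact Or.inl hm))
      have h2 := prop_transfer Θ Θ' i i' χ hp.2
        (fun p hm => h p (by simp [LTL.tvars]; exact Or.inr hm))
      simp only [HSatQF]; tauto
  | .next _, hp, _ => hp.elim
  | .untl _ _, hp, _ => hp.elim

lemma top_true {T : Set (ℕ → XY → Bool)} (Θ : ℕ → Option ↥T) (i : ℕ) (a : XY × ℕ) :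
    HSatQF Θ i (ltlTop a) := by
  simp only [ltlTop, HSatQF]
  exact Classical.em _

lemma G_iff {T : Set (ℕ → XY → Bool)} (Θ : ℕ → Option ↥T) (a : XY × ℕ)
    (ψ : LTL (XY × ℕ)) :
    HSatQF Θ 0 (ltlG a ψ) ↔ ∀ j, HSatQF Θ j ψ := by
  simp only [ltlG, HSatQF]
  constructor
  · intro h j
    by_contra hj
    exact h ⟨j, Nat.zero_le j, hj, fun j' _ _ => top_true Θ j' a⟩
  · rintro h ⟨j, _, hj, _⟩
    exact hj (h j)

lemma shift_atom (f : ℕ → Option (Bool × ℕ)) (k : ℕ) (p : XY × ℕ) :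
    ASat (fun π => (f π).map liftA) k p ↔ ASat (fun π => (f π).map liftB) (k + 1) p := by
  obtain ⟨a, n⟩ := p
  unfold ASat
  cases hf : f n with
  | none => simp [hf]
  | some q =>
    have e : decide (k + 1 = q.2 + 1) = decide (k = q.2) := by simp
    simp only [hf, Option.map_some, Option.some.injEq]
    constructor
    · rintro ⟨τ, rfl, hv⟩
      refine ⟨liftB q, rfl, ?_⟩
      cases a
      · simpa using hv
      · simp only [liftB_coe, tr_y, e]
        simpa using hv
    · rintro ⟨τ, rfl, hv⟩
      refine ⟨liftA q, rfl, ?_⟩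
      cases a
      · simpa using hv
      · simp only [liftB_coe, tr_y, e] at hv
        simpa using hv

lemma zero_atom (f : ℕ → Option (Bool × ℕ)) (t : ℕ) (p : XY × ℕ)
    (ht : ∀ q, f p.2 = some q → t ≠ q.2) :
    ASat (fun π => (f π).map liftA) t p ↔ ASat (fun π => (f π).map liftB) 0 p := by
  obtain ⟨a, n⟩ := p
  unfold ASat
  cases hf : f n with
  | none => simp [hf]
  | some q =>
    have htq : decide (t = q.2) = false := by simp [ht q hf]
    have h0 : decide (0 = q.2 + 1) = false := by simp
    simp only [hf, Option.map_some, Option.some.injEq]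
    constructor
    · rintro ⟨τ, rfl, hv⟩
      refine ⟨liftB q, rfl, ?_⟩
      cases a
      · simpa using hv
      · simp only [liftA_coe, tr_y, htq] at hv
        simp only [liftB_coe, tr_y, h0]
        exact hv
    · rintro ⟨τ, rfl, hv⟩
      refine ⟨liftA q, rfl, ?_⟩
      cases a
      · simpa using hv
      · simp only [liftB_coe, tr_y, h0] at hv
        simp only [liftA_coe, tr_y, htq]
        exact hv

lemma main_transfer : ∀ (χ : HyperLTL XY), χ.InG → ∀ f : ℕ → Option (Bool × ℕ),
    HSat (T := SetA) (fun π => (f π).map liftA) 0 χ →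
    HSat (T := SetB) (fun π => (f π).map liftB) 0 χ
  | .ex π χ, hg, f, h => by
      obtain ⟨⟨τ, c, m, rfl⟩, hτ⟩ := h
      refine ⟨liftB (c, m), ?_⟩
      have hup : (Function.update (fun π' => (f π').map liftA) π
          (some (⟨tr c m, c, m, rfl⟩ : ↥SetA)))
          = fun π' => ((Function.update f π (some (c, m))) π').map liftA := by
        funext π'
        by_cases hπ : π' = π <;> simp [hπ, Function.update, liftA]
      rw [hup] at hτ
      have := main_transfer χ hg (Function.update f π (some (c, m))) hτ
      have hup' : (fun π' => ((Function.update f π (some (c, m))) π').map liftB)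
          = Function.update (fun π' => (f π').map liftB) π (some (liftB (c, m))) := by
        funext π'
        by_cases hπ : π' = π <;> simp [hπ, Function.update]
      rwa [hup'] at this
  | .all π χ, hg, f, h => by
      rintro ⟨τ, c, m, rfl⟩
      have hτ := h (liftA (c, m))
      have hup : (Function.update (fun π' => (f π').map liftA) π (some (liftA (c, m))))
          = fun π' => ((Function.update f π (some (c, m))) π').map liftA := by
        funext π'
        by_cases hπ : π' = π <;> simp [hπ, Function.update]
      rw [hup] at hτ
      have := main_transfer χ hg (Function.update f π (some (c, m))) hτ
      have hup' : (fun π' => ((Function.update f π (some (c, m))) π').map liftB)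
          = Function.update (fun π' => (f π').map liftB) π
            (some (⟨tr c (m + 1), c, m, rfl⟩ : ↥SetB)) := by
        funext π'
        by_cases hπ : π' = π <;> simp [hπ, Function.update, liftB]
      rwa [hup'] at this
  | .qf φ, hg, f, h => by
      obtain ⟨a, ψ, hψ, rfl⟩ := hg
      rw [show HSat (T := SetA) (fun π => (f π).map liftA) 0 (HyperLTL.qf (ltlG a ψ))
        = HSatQF (fun π => (f π).map liftA) 0 (ltlG a ψ) from rfl, G_iff] at h
      rw [show HSat (T := SetB) (fun π => (f π).map liftB) 0 (HyperLTL.qf (ltlG a ψ))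
        = HSatQF (fun π => (f π).map liftB) 0 (ltlG a ψ) from rfl, G_iff]
      intro j
      cases j with
      | succ k =>
        exact (prop_transfer _ _ k (k + 1) ψ hψ (fun p _ => shift_atom f k p)).mp (h k)
      | zero =>
        set t := (ψ.tvars.sup fun π => (f π).elim 0 Prod.snd) + 1 with ht
        refine (prop_transfer _ _ t 0 ψ hψ (fun p hm => zero_atom f t p ?_)).mp (h t)
        intro q hq hcon
        have : q.2 ≤ ψ.tvars.sup fun π => (f π).elim 0 Prod.snd := by
          simpa [hq] using Finset.le_sup (f := fun π => (f π).elim 0 Prod.snd) hm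
        omega

end PfAux

/-- No HyperLTL sentence over `{x,y}` in the class `2^𝔾` generates
exactly the sets of infinite traces in which `x` and `y` are point independent. -/
theorem no_globallyHyperLTL_for_pointIndependence
    (φ : HyperLTL XY) (hc : φ.Closed) (hg : φ.InG) :
    {T : Set (ℕ → XY → Bool) | HModels T φ} ≠ {T | PointIndep XY.x XY.y T} := by
  intro h
  have hA : HModels PfAux.SetA φ := by
    have : PfAux.SetA ∈ {T | PointIndep XY.x XY.y T} := PfAux.piA
    rw [← h] at this
    exact this
  have hB : HModels PfAux.SetB φ := by
    have := PfAux.main_transfer φ hg (fun _ => none)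
    simp only [Option.map_none] at this
    exact this hA
  have : PfAux.SetB ∈ {T | PointIndep XY.x XY.y T} := by rw [← h]; exact hB
  exact PfAux.not_piB this
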